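/- Let x_0 ∈ ℝ^n and r̄_0 = A x_0 − b. Let (x_k) be a full NGMRES sequence starting from x_0: for each k, x_{k+1} = q(x_k) + Σ_{i=0}^{k} β_i^{(k)} (q(x_k) − x_{k−i}) where β^{(k)} ∈ ℝ^{k+1} minimizes ‖A x_{k+1} − b‖ over all coefficient vectors. Let (x_k^{Gr}) be a right-preconditioned GMRES sequence with x_0^{Gr} = x_0: for each k, x_k^{Gr} ∈ x_0 + P · K_k(AP, r̄_0) and ‖A x_k^{Gr} − b‖ ≤ ‖A y − b‖ for every y ∈ x_0 + P · K_k(AP, r̄_0); write r̄_k^{Gr} = A x_k^{Gr} − b. Assume that for some k* ∈ ℤ^+, r̄_{k*−1}^{Gr} ≠ 0 and ‖r̄_k^{Gr}‖ < ‖r̄_{k−1}^{Gr}‖ for all integers k with 0 < k < k*. Then x_k = x_k^{Gr} for all 0 ≤ k ≤ k*. -/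

import Mathlib

open scoped RealInnerProductSpace

/-- Matrix-vector multiplication on Euclidean space. -/
noncomputable def mulV {n : ℕ} (M : Matrix (Fin n) (Fin n) ℝ)
    (v : EuclideanSpace ℝ (Fin n)) : EuclideanSpace ℝ (Fin n) :=
  Matrix.toEuclideanLin M v

/-- Krylov subspace `K_k(M, v) = span {v, M v, …, M^(k-1) v}`. -/
noncomputable def Krylov {n : ℕ} (M : Matrix (Fin n) (Fin n) ℝ)
    (v : EuclideanSpace ℝ (Fin n)) (k : ℕ) : Submodule ℝ (EuclideanSpace ℝ (Fin n)) :=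
  Submodule.span ℝ (Set.range fun i : Fin k => mulV (M ^ (i : ℕ)) v)

namespace Stmt7Aux
variable {n : ℕ} {M N : Matrix (Fin n) (Fin n) ℝ} {u v : EuclideanSpace ℝ (Fin n)}

lemma mulV_add (M : Matrix (Fin n) (Fin n) ℝ) (u v : EuclideanSpace ℝ (Fin n)) :
    mulV M (u + v) = mulV M u + mulV M v := map_add (Matrix.toEuclideanLin M) u v

lemma mulV_sub (M : Matrix (Fin n) (Fin n) ℝ) (u v : EuclideanSpace ℝ (Fin n)) :
    mulV M (u - v) = mulV M u - mulV M v := map_sub (Matrix.toEuclideanLin M) u v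

lemma mulV_smul (M : Matrix (Fin n) (Fin n) ℝ) (c : ℝ) (v : EuclideanSpace ℝ (Fin n)) :
    mulV M (c • v) = c • mulV M v := map_smul (Matrix.toEuclideanLin M) c v

lemma mulV_zero (M : Matrix (Fin n) (Fin n) ℝ) : mulV M (0 : EuclideanSpace ℝ (Fin n)) = 0 :=
  map_zero (Matrix.toEuclideanLin M)

lemma mulV_mul (M N : Matrix (Fin n) (Fin n) ℝ) (v : EuclideanSpace ℝ (Fin n)) :
    mulV (M * N) v = mulV M (mulV N v) := by
  simp [mulV, Matrix.toEuclideanLin_apply, Matrix.mulVec_mulVec]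

lemma mulV_inj (hM : IsUnit M.det) : Function.Injective (mulV M) := by
  have h1 := (Matrix.mulVec_injective_iff_isUnit).2 ((Matrix.isUnit_iff_isUnit_det M).2 hM)
  intro a b hab
  have : M.mulVec (WithLp.equiv 2 _ a) = M.mulVec (WithLp.equiv 2 _ b) := by
    have := congrArg (WithLp.equiv 2 (Fin n → ℝ)) hab
    simpa [mulV, Matrix.toEuclideanLin_apply] using this
  exact (WithLp.equiv 2 (Fin n → ℝ)).injective (h1 this)

lemma mulV_one (v : EuclideanSpace ℝ (Fin n)) : mulV (1 : Matrix (Fin n) (Fin n) ℝ) v = v := by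
  simp [mulV, Matrix.toEuclideanLin_apply]

lemma Krylov_zero (M : Matrix (Fin n) (Fin n) ℝ) (v : EuclideanSpace ℝ (Fin n)) :
    Krylov M v 0 = ⊥ := by
  simp [Krylov, Set.range_eq_empty]

lemma Krylov_succ (M : Matrix (Fin n) (Fin n) ℝ) (v : EuclideanSpace ℝ (Fin n)) (k : ℕ) :
    Krylov M v (k + 1) = Krylov M v k ⊔ Submodule.span ℝ {mulV (M ^ k) v} := by
  rw [Krylov, Krylov, ← Submodule.span_union]
  congr 1
  ext w
  constructor
  · rintro ⟨i, rfl⟩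
    rcases lt_or_eq_of_le (Nat.lt_succ_iff.mp i.2) with h | h
    · exact Or.inl ⟨⟨i, h⟩, rfl⟩
    · exact Or.inr (by simp [h])
  · rintro (⟨i, rfl⟩ | h)
    · exact ⟨⟨i, Nat.lt_succ_of_lt i.2⟩, rfl⟩
    · exact ⟨⟨k, Nat.lt_succ_self k⟩, by simp_all⟩

lemma Krylov_mono (M : Matrix (Fin n) (Fin n) ℝ) (v : EuclideanSpace ℝ (Fin n)) :
    Monotone (Krylov M v) := by
  apply monotone_nat_of_le_succ
  intro k
  rw [Krylov_succ]
  exact le_sup_left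

lemma self_mem_Krylov (M : Matrix (Fin n) (Fin n) ℝ) (v : EuclideanSpace ℝ (Fin n))
    {k : ℕ} (hk : 0 < k) : v ∈ Krylov M v k := by
  have : v ∈ Krylov M v 1 := by
    have h0 : mulV (M ^ (0 : ℕ)) v = v := by rw [pow_zero, mulV_one]
    rw [Krylov_succ, Krylov_zero, h0]
    exact Submodule.mem_sup_right (Submodule.mem_span_singleton_self v)
  exact Krylov_mono M v hk this

lemma mulV_mem_Krylov (M : Matrix (Fin n) (Fin n) ℝ) (v : EuclideanSpace ℝ (Fin n))
    {k : ℕ} {w : EuclideanSpace ℝ (Fin n)} (hw : w ∈ Krylov M v k) :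
    mulV M w ∈ Krylov M v (k + 1) := by
  induction hw using Submodule.span_induction with
  | mem y hy =>
      rcases hy with ⟨i, rfl⟩
      rw [← mulV_mul, ← pow_succ']
      exact Submodule.subset_span ⟨⟨(i : ℕ) + 1, Nat.succ_lt_succ i.2⟩, rfl⟩
  | zero => simpa [mulV_zero] using Submodule.zero_mem _
  | add a b _ _ ha hb => rw [mulV_add]; exact Submodule.add_mem _ ha hb
  | smul c a _ ha => rw [mulV_smul]; exact Submodule.smul_mem _ c ha

end Stmt7Aux
namespace Stmt7Aux

lemma min_unique {E : Type*} [NormedAddCommGroup E] [InnerProductSpace ℝ E]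
    (S : Submodule ℝ E) (u : E) {w1 w2 : E} (h1 : w1 ∈ S) (h2 : w2 ∈ S)
    (m1 : ∀ s ∈ S, ‖u + w1‖ ≤ ‖u + s‖) (m2 : ∀ s ∈ S, ‖u + w2‖ ≤ ‖u + s‖) :
    w1 = w2 := by
  have e : ‖u + w1‖ = ‖u + w2‖ := le_antisymm (m1 w2 h2) (m2 w1 h1)
  set s : E := (2⁻¹ : ℝ) • (w1 + w2) with hs
  have hsS : s ∈ S := S.smul_mem _ (S.add_mem h1 h2)
  have hpar := parallelogram_law_with_norm ℝ (u + w1) (u + w2)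
  have hab : (u + w1) + (u + w2) = (2 : ℝ) • (u + s) := by
    rw [hs, smul_add, smul_smul]
    norm_num
    module
  have habn : ‖(u + w1) + (u + w2)‖ = 2 * ‖u + s‖ := by
    rw [hab, norm_smul]
    norm_num
  have hm : ‖u + w1‖ ≤ ‖u + s‖ := m1 s hsS
  have hsub : (u + w1) - (u + w2) = w1 - w2 := by abel
  rw [habn, hsub, ← e] at hpar
  have h0 : ‖w1 - w2‖ = 0 := by
    nlinarith [norm_nonneg (w1 - w2), norm_nonneg (u + w1), norm_nonneg (u + s)]
  rw [← sub_eq_zero]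
  exact norm_eq_zero.mp h0

end Stmt7Aux


open Stmt7Aux in
/-- full NGMRES on preconditioned Richardson equals right-preconditioned GMRES. -/
theorem stmt_7 {n : ℕ} (A P : Matrix (Fin n) (Fin n) ℝ)
    (hA : IsUnit A.det) (hP : IsUnit P.det)
    (b : EuclideanSpace ℝ (Fin n))
    (q : EuclideanSpace ℝ (Fin n) → EuclideanSpace ℝ (Fin n))
    (hq : ∀ y, q y = y + mulV P (b - mulV A y))
    (x xG : ℕ → EuclideanSpace ℝ (Fin n))
    (rb0 : EuclideanSpace ℝ (Fin n)) (hrb0 : rb0 = mulV A (x 0) - b)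
    -- full NGMRES sequence
    (β : ℕ → ℕ → ℝ)
    (hstep : ∀ k, x (k + 1) =
      q (x k) + ∑ i ∈ Finset.range (k + 1), β k i • (q (x k) - x (k - i)))
    (hopt : ∀ k, ∀ c : ℕ → ℝ,
      ‖mulV A (x (k + 1)) - b‖ ≤
      ‖mulV A (q (x k) + ∑ i ∈ Finset.range (k + 1), c i • (q (x k) - x (k - i))) - b‖)
    -- right-preconditioned GMRES sequence
    (hG0 : xG 0 = x 0)
    (hGmem : ∀ k, ∃ z ∈ Krylov (A * P) rb0 k, xG k = x 0 + mulV P z)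
    (hGopt : ∀ k, ∀ z ∈ Krylov (A * P) rb0 k,
      ‖mulV A (xG k) - b‖ ≤ ‖mulV A (x 0 + mulV P z) - b‖)
    (kstar : ℕ) (hkstar : 0 < kstar)
    (hne : mulV A (xG (kstar - 1)) - b ≠ 0)
    (hdec : ∀ k, 0 < k → k < kstar →
      ‖mulV A (xG k) - b‖ < ‖mulV A (xG (k - 1)) - b‖) :
    ∀ k ≤ kstar, x k = xG k := by
  classical
  choose z hzmem hzx using hGmem
  set KK : ℕ → Submodule ℝ (EuclideanSpace ℝ (Fin n)) := Krylov (A * P) rb0 with hKK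
  have hKzero : KK 0 = ⊥ := Krylov_zero (A * P) rb0
  have hKsucc : ∀ j, KK (j + 1) = KK j ⊔ Submodule.span ℝ {mulV ((A * P) ^ j) rb0} :=
    fun j => Krylov_succ (A * P) rb0 j
  have hKmono : Monotone KK := Krylov_mono (A * P) rb0
  have hKself : ∀ {k : ℕ}, 0 < k → rb0 ∈ KK k := fun hk => self_mem_Krylov (A * P) rb0 hk
  have hKmap : ∀ {k : ℕ} {ww : EuclideanSpace ℝ (Fin n)}, ww ∈ KK k →
      mulV (A * P) ww ∈ KK (k + 1) := fun h => mulV_mem_Krylov (A * P) rb0 h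
  have hKgen : ∀ j, mulV ((A * P) ^ j) rb0 ∈ KK (j + 1) := by
    intro j
    rw [hKsucc j]
    exact Submodule.mem_sup_right (Submodule.mem_span_singleton_self _)
  have hz0 : z 0 = 0 := by
    have h := hzmem 0
    rw [hKzero] at h
    simpa using h
  have hAPdet : IsUnit (A * P).det := by
    rw [Matrix.det_mul]; exact hA.mul hP
  -- residual formula
  have hres : ∀ zz, mulV A (x 0 + mulV P zz) - b = rb0 + mulV (A * P) zz := by
    intro zz
    rw [mulV_add, mulV_mul, hrb0]
    abel
  have hresG : ∀ k, mulV A (xG k) - b = rb0 + mulV (A * P) (z k) := by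
    intro k; rw [hzx k]; exact hres _
  -- strict decrease forces new directions
  have hznot : ∀ j, j + 1 < kstar → z (j + 1) ∉ KK j := by
    intro j hj hmem
    have h1 := hGopt j (z (j + 1)) hmem
    rw [← hzx (j + 1)] at h1
    have h2 := hdec (j + 1) (Nat.succ_pos j) hj
    simp only [Nat.add_sub_cancel] at h2
    exact absurd h1 (not_le.mpr h2)
  -- Krylov space built from GMRES iterates
  have hKstep : ∀ j, j + 1 < kstar →
      KK (j + 1) = KK j ⊔ Submodule.span ℝ {z (j + 1)} := by
    intro j hj
    have hnot := hznot j hj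
    apply le_antisymm
    · rw [hKsucc j]
      refine sup_le le_sup_left ?_
      rw [Submodule.span_singleton_le_iff_mem]
      have hmem := hzmem (j + 1)
      rw [hKsucc j] at hmem
      rcases Submodule.mem_sup.mp hmem with ⟨u, hu, s, hs, huv⟩
      rcases Submodule.mem_span_singleton.mp hs with ⟨c, rfl⟩
      have hc : c ≠ 0 := by
        rintro rfl
        apply hnot
        have : z (j + 1) = u := by rw [← huv]; simp
        rw [this]; exact hu
      have hg : mulV ((A * P) ^ j) rb0 = c⁻¹ • (z (j + 1) - u) := by
        rw [← huv]
        rw [show u + c • mulV ((A * P) ^ j) rb0 - u = c • mulV ((A * P) ^ j) rb0 by abel]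
        rw [smul_smul, inv_mul_cancel₀ hc, one_smul]
      rw [hg]
      exact Submodule.smul_mem _ _ (Submodule.sub_mem _
        (Submodule.mem_sup_right (Submodule.mem_span_singleton_self _))
        (Submodule.mem_sup_left hu))
    · refine sup_le (hKmono (Nat.le_succ j)) ?_
      rw [Submodule.span_singleton_le_iff_mem]
      exact hzmem (j + 1)
  -- main induction
  suffices h : ∀ k, k ≤ kstar → ∀ j, j ≤ k → x j = xG j by
    intro k hk; exact h k hk k le_rfl
  intro k
  induction k with
  | zero =>
      intro _ j hj
      rw [Nat.le_zero.mp hj]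
      exact hG0.symm
  | succ m ih =>
      intro hm j hj
      have hmk : m ≤ kstar := Nat.le_of_succ_le hm
      have hmlt : m < kstar := hm
      have ih' : ∀ j ≤ m, x j = xG j := ih hmk
      rcases Nat.lt_succ_iff_lt_or_eq.mp (Nat.lt_succ_of_le hj) with hlt | rfl
      · exact ih' j (Nat.lt_succ_iff.mp hlt)
      -- now j = m + 1 : the real work
      set w : EuclideanSpace ℝ (Fin n) := z m - rb0 - mulV (A * P) (z m) with hw
      set d : ℕ → EuclideanSpace ℝ (Fin n) := fun i => w - z (m - i) with hd
      have hdi : ∀ i, d i = w - z (m - i) := fun i => rfl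
      clear_value d w
      have hxj : ∀ i ≤ m, x i = x 0 + mulV P (z i) := by
        intro i hi; rw [ih' i hi, hzx i]
      -- (a) q (x m) = x 0 + P w
      have hqx : q (x m) = x 0 + mulV P w := by
        rw [hq, hxj m le_rfl]
        have h1 : b - mulV A (x 0 + mulV P (z m)) = -(rb0 + mulV (A * P) (z m)) := by
          rw [← hres]; abel
        rw [h1, hw]
        rw [show z m - rb0 - mulV (A * P) (z m) = z m + -(rb0 + mulV (A * P) (z m)) by abel]
        rw [mulV_add]
        abel
      -- (b) differences
      have hdiff : ∀ i ≤ m, q (x m) - x (m - i) = mulV P (d i) := by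
        intro i hi
        rw [hqx, hxj (m - i) (Nat.sub_le m i), hdi i, mulV_sub]
        abel
      -- (c) memberships in KK (m+1)
      have hzK : ∀ i ≤ m + 1, z i ∈ KK (m + 1) :=
        fun i hi => hKmono hi (hzmem i)
      have hrb0K : rb0 ∈ KK (m + 1) := hKself (Nat.succ_pos m)
      have hAPzK : mulV (A * P) (z m) ∈ KK (m + 1) := hKmap (hzmem m)
      have hwK : w ∈ KK (m + 1) := by
        rw [hw]
        exact Submodule.sub_mem _ (Submodule.sub_mem _ (hzK m (Nat.le_succ m)) hrb0K) hAPzK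
      have hdKmem : ∀ i ≤ m, d i ∈ KK (m + 1) := fun i hi => by
        rw [hdi i]
        exact Submodule.sub_mem _ hwK (hzK (m - i) (le_trans (Nat.sub_le m i) (Nat.le_succ m)))
      -- (d) KK (m+1) ≤ D := span of the d's
      set D : Submodule ℝ (EuclideanSpace ℝ (Fin n)) :=
        Submodule.span ℝ (Set.range fun i : Fin (m + 1) => d i) with hD
      have hdmemD : ∀ i ≤ m, d i ∈ D := by
        intro i hi
        exact Submodule.subset_span ⟨⟨i, Nat.lt_succ_of_le hi⟩, rfl⟩
      have hwD : w ∈ D := by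
        have h1 : d m = w := by rw [hdi m, Nat.sub_self, hz0, sub_zero]
        rw [← h1]; exact hdmemD m le_rfl
      have hzD : ∀ i ≤ m, z i ∈ D := by
        intro i hi
        have h1 : d (m - i) = w - z i := by
          rw [hdi (m - i), Nat.sub_sub_self hi]
        have h2 : z i = w - d (m - i) := by rw [h1]; abel
        rw [h2]
        exact Submodule.sub_mem _ hwD (hdmemD (m - i) (Nat.sub_le m i))
      have hKjD : ∀ i ≤ m, KK i ≤ D := by
        intro i hi
        induction i with
        | zero => rw [hKzero]; exact bot_le
        | succ p ihp =>
            rw [hKstep p (lt_of_le_of_lt hi hmlt)]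
            refine sup_le (ihp (Nat.le_of_succ_le hi)) ?_
            rw [Submodule.span_singleton_le_iff_mem]
            exact hzD (p + 1) hi
      have hKD : KK (m + 1) ≤ D := by
        rw [hKsucc m]
        refine sup_le (hKjD m le_rfl) ?_
        rw [Submodule.span_singleton_le_iff_mem]
        have hAPzD : mulV (A * P) (z m) ∈ D := by
          have : mulV (A * P) (z m) = z m - rb0 - w := by rw [hw]; abel
          rw [this]
          rcases Nat.eq_zero_or_pos m with rfl | hm0
          · rw [hz0]
            refine Submodule.sub_mem _ (Submodule.sub_mem _ (Submodule.zero_mem _) ?_) hwD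
            have : rb0 = -w := by rw [hw, hz0]; simp [mulV_zero]
            rw [this]
            exact Submodule.neg_mem _ hwD
          · exact Submodule.sub_mem _ (Submodule.sub_mem _ (hzD m le_rfl)
              (hKjD 1 hm0 (self_mem_Krylov _ _ one_pos))) hwD
        rcases Nat.eq_zero_or_pos m with rfl | hm0
        · -- generator is rb0 itself
          rw [pow_zero, mulV_one]
          have : rb0 = -w := by rw [hw, hz0]; simp [mulV_zero]
          rw [this]
          exact Submodule.neg_mem _ hwD
        · -- m = p + 1
          obtain ⟨p, rfl⟩ : ∃ p, m = p + 1 := ⟨m - 1, (Nat.succ_pred_eq_of_pos hm0).symm⟩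
          rw [pow_succ', mulV_mul]
          have hgen : mulV ((A * P) ^ p) rb0 ∈ KK (p + 1) := hKgen p
          rw [hKstep p hmlt] at hgen
          rcases Submodule.mem_sup.mp hgen with ⟨u, hu, s, hs, huv⟩
          rcases Submodule.mem_span_singleton.mp hs with ⟨c, rfl⟩
          rw [← huv, mulV_add, mulV_smul]
          refine Submodule.add_mem _ ?_ (Submodule.smul_mem _ _ hAPzD)
          exact hKjD (p + 1) le_rfl (mulV_mem_Krylov _ _ hu)
      -- (e) x (m+1) in explicit form
      have hsum : ∀ c : ℕ → ℝ,
          q (x m) + ∑ i ∈ Finset.range (m + 1), c i • (q (x m) - x (m - i)) =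
          x 0 + mulV P (w + ∑ i ∈ Finset.range (m + 1), c i • d i) := by
        intro c
        have h1 : ∀ i ∈ Finset.range (m + 1),
            c i • (q (x m) - x (m - i)) = c i • mulV P (d i) := by
          intro i hi
          rw [hdiff i (Nat.lt_succ_iff.mp (Finset.mem_range.mp hi))]
        rw [Finset.sum_congr rfl h1, hqx]
        have h2 : mulV P (∑ i ∈ Finset.range (m + 1), c i • d i) =
            ∑ i ∈ Finset.range (m + 1), c i • mulV P (d i) := by
          refine (map_sum (Matrix.toEuclideanLin P) (fun i => c i • d i)
            (Finset.range (m + 1))).trans ?_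
          exact Finset.sum_congr rfl fun i _ => map_smul (Matrix.toEuclideanLin P) (c i) (d i)
        rw [mulV_add, h2]
        abel
      set z' : EuclideanSpace ℝ (Fin n) :=
        w + ∑ i ∈ Finset.range (m + 1), β m i • d i with hz'
      clear_value z'
      have hx1 : x (m + 1) = x 0 + mulV P z' := by
        rw [hstep m, hsum (β m), hz']
      have hz'K : z' ∈ KK (m + 1) := by
        rw [hz']
        refine Submodule.add_mem _ hwK (Submodule.sum_mem _ fun i hi => ?_)
        exact Submodule.smul_mem _ _ (hdKmem i (Nat.lt_succ_iff.mp (Finset.mem_range.mp hi)))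
      -- (f) minimality of x (m+1) over the Krylov candidates
      have hmin : ∀ zz ∈ KK (m + 1),
          ‖mulV A (x (m + 1)) - b‖ ≤ ‖mulV A (x 0 + mulV P zz) - b‖ := by
        intro zz hzz
        have hzzD : zz - w ∈ D := Submodule.sub_mem _ (hKD hzz) hwD
        rw [hD] at hzzD
        rcases (Submodule.mem_span_range_iff_exists_fun ℝ).mp hzzD with ⟨c, hc⟩
        set c' : ℕ → ℝ := fun i => if h : i < m + 1 then c ⟨i, h⟩ else 0 with hc'
        have hcs : ∑ i ∈ Finset.range (m + 1), c' i • d i = zz - w := by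
          rw [← hc, Finset.sum_range fun i => c' i • d i]
          refine Finset.sum_congr rfl fun i _ => ?_
          simp [hc']
          intro h; exact absurd i.2 (by omega)
        have := hopt m c'
        rwa [hsum c', hcs, show w + (zz - w) = zz by abel] at this
      -- (g) uniqueness of the least-squares minimizer
      have hminG := hGopt (m + 1)
      set S : Submodule ℝ (EuclideanSpace ℝ (Fin n)) :=
        (KK (m + 1)).map (Matrix.toEuclideanLin (A * P)) with hS
      have hw1S : mulV (A * P) z' ∈ S := ⟨z', hz'K, rfl⟩
      have hw2S : mulV (A * P) (z (m + 1)) ∈ S := ⟨z (m + 1), hzmem (m + 1), rfl⟩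
      have hm1 : ∀ s ∈ S, ‖rb0 + mulV (A * P) z'‖ ≤ ‖rb0 + s‖ := by
        rintro s ⟨zz, hzz, rfl⟩
        have := hmin zz hzz
        rw [hx1, hres z', hres zz] at this
        exact this
      have hm2 : ∀ s ∈ S, ‖rb0 + mulV (A * P) (z (m + 1))‖ ≤ ‖rb0 + s‖ := by
        rintro s ⟨zz, hzz, rfl⟩
        have := hminG zz hzz
        rw [hresG (m + 1), hres zz] at this
        exact this
      have heq := min_unique S rb0 hw1S hw2S hm1 hm2
      have hz'' : z' = z (m + 1) := mulV_inj hAPdet heq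
      rw [hx1, hz'', ← hzx (m + 1)]
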